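/- Let X ⊂ ℝ^m be a compact box covered by sub-boxes Y^1,...,Y^N, f: ℝ^m → ℝ^p continuous, and f^k ≤ f componentwise on Y^k with gap f_j(x) - f_j^k(x) < ε for all j and x ∈ Y^k. Then every weakly efficient solution of min_X f belongs to X^ε_{wE_ap} = {x ∈ ⋃_k W^ε_k : ∄ y ∈ ⋃_k W^ε_k with f(y) + ε·e ≺ f(x)}, where W^ε_k is the set of ε-weakly efficient solutions of min_{Y^k} f^k. -/
import Mathlib

/-- Every weakly efficient solution of the original problem belongs to the `ε`-weakly
efficient solution set of the piecewise convexification problem. -/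
theorem stmt12 (m p N : ℕ) (Y : Fin N → Set (Fin m → ℝ))
    (f : (Fin m → ℝ) → Fin p → ℝ) (hf : Continuous f)
    (fk : Fin N → (Fin m → ℝ) → Fin p → ℝ)
    (ε : ℝ) (hε : 0 < ε)
    (hle : ∀ k, ∀ x ∈ Y k, ∀ j, fk k x j ≤ f x j)
    (hgap : ∀ k, ∀ x ∈ Y k, ∀ j, f x j - fk k x j < ε)
    (Wε : Fin N → Set (Fin m → ℝ))
    (hWε : ∀ k, Wε k = {z ∈ Y k | ¬∃ y ∈ Y k, ∀ j, fk k y j + ε < fk k z j})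
    (x : Fin m → ℝ) (hx : x ∈ ⋃ k, Y k)
    (hweff : ¬∃ y ∈ ⋃ k, Y k, ∀ j, f y j < f x j) :
    x ∈ {z ∈ ⋃ k, Wε k | ¬∃ y ∈ ⋃ k, Wε k, ∀ j, f y j + ε < f z j} := by
  obtain ⟨_, ⟨k, rfl⟩, hxk⟩ := hx
  constructor
  · refine Set.mem_iUnion.2 ⟨k, ?_⟩
    rw [hWε k]
    refine ⟨hxk, ?_⟩
    rintro ⟨y, hy, hyx⟩
    exact hweff ⟨y, Set.mem_iUnion.2 ⟨k, hy⟩, fun j =>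
      lt_of_lt_of_le (lt_of_lt_of_le (by linarith [hgap k y hy j]) (le_of_lt (hyx j)))
        (hle k x hxk j)⟩
  · rintro ⟨y, hy, hyx⟩
    obtain ⟨_, ⟨l, rfl⟩, hyl⟩ := hy
    have hyY : y ∈ Y l := by have := hyl; simp only [hWε l] at this; exact this.1
    exact hweff ⟨y, Set.mem_iUnion.2 ⟨l, hyY⟩, fun j => by linarith [hyx j]⟩
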